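/- Let K be a convex body in ℝ², let p, p′ be distinct points in the interior of K, and let z be a point in the interior of K not lying on the line through p and p′. Let x and y be the two points where the line through z and p meets ∂K, ordered ⟨x,z,p,y⟩, and let x′ and y′ be the two points where the line through z and p′ meets ∂K, ordered ⟨x′,z,p′,y′⟩. Let ℓ_x be the line through x and x′, ℓ_p the line through p and p′, and ℓ_y the line through y and y′. Assume ℓ_x and ℓ_p are not parallel, and ℓ_y and ℓ_p are not parallel. Then H_K(z,p) = H_K(z,p′) if and only if the three lines ℓ_x, ℓ_p, and ℓ_y are concurrent (pass through a common point). -/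

import Mathlib

section helpers

variable {E : Type*} [NormedAddCommGroup E] [NormedSpace ℝ E]

lemma seg_param {x z p : E} (h : z ∈ openSegment ℝ x p) :
    ∃ a : ℝ, 0 < a ∧ x = z - a • (p - z) := by
  obtain ⟨α, β, hα, hβ, hαβ, hc⟩ := h
  refine ⟨β / α, div_pos hβ hα, ?_⟩
  apply smul_right_injective E hα.ne'
  show α • x = α • (z - (β / α) • (p - z))
  rw [smul_sub, smul_smul, mul_div_cancel₀ _ hα.ne']
  linear_combination (norm := module) hc - hαβ • z

lemma seg_param2 {z p y : E} (h : p ∈ openSegment ℝ z y) :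
    ∃ b : ℝ, 1 < b ∧ y = z + b • (p - z) := by
  obtain ⟨γ, δ, hγ, hδ, hγδ, hc⟩ := h
  have hδ1 : δ < 1 := by linarith
  refine ⟨1 / δ, (one_lt_div hδ).2 hδ1, ?_⟩
  apply smul_right_injective E hδ.ne'
  show δ • y = δ • (z + (1 / δ) • (p - z))
  rw [smul_add, smul_smul, mul_one_div, div_self hδ.ne', one_smul]
  linear_combination (norm := module) hc - hγδ • z

lemma frontier_param_lt {K : Set E} (hKconv : Convex ℝ K) {z : E} (hz : z ∈ interior K)
    {v : E} {s t : ℝ} (hs : 0 < s) (hst : s < t)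
    (h1 : z + s • v ∈ frontier K) (h2 : z + t • v ∈ frontier K) : False := by
  have ht : 0 < t := hs.trans hst
  have hmem : z + s • v ∈ interior K := by
    have h3 := hKconv.combo_interior_closure_mem_interior hz (frontier_subset_closure h2)
      (a := 1 - s / t) (b := s / t) (by rw [sub_pos]; exact (div_lt_one ht).2 hst)
      (by positivity) (by ring)
    have he : (1 - s / t) • z + (s / t) • (z + t • v) = z + s • v := by
      match_scalars <;> field_simp <;> ring
    rwa [he] at h3
  exact h1.2 hmem

lemma frontier_param_unique {K : Set E} (hKconv : Convex ℝ K) {z : E} (hz : z ∈ interior K)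
    {v : E} {s t : ℝ} (hs : 0 < s) (ht : 0 < t)
    (h1 : z + s • v ∈ frontier K) (h2 : z + t • v ∈ frontier K) : s = t := by
  rcases lt_trichotomy s t with h | h | h
  · exact absurd (frontier_param_lt hKconv hz hs h h1 h2) not_false
  · exact h
  · exact absurd (frontier_param_lt hKconv hz ht h h2 h1) not_false

end helpers

/-- `H` is the Hilbert metric of the convex body `K`: `H p p = 0` for interior points,
and for distinct interior points `p, q`, letting `x` and `y` be the boundary points of the
chord of `K` through `p` and `q`, in the order `⟨x, p, q, y⟩`,
`H p q = (1/2) · ln ((‖p - y‖·‖q - x‖)/(‖q - y‖·‖p - x‖))`. -/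
def IsHilbertDist {d : ℕ} (K : Set (EuclideanSpace ℝ (Fin d)))
    (H : EuclideanSpace ℝ (Fin d) → EuclideanSpace ℝ (Fin d) → ℝ) : Prop :=
  (∀ p ∈ interior K, H p p = 0) ∧
  (∀ p ∈ interior K, ∀ q ∈ interior K, p ≠ q →
    ∃ x ∈ frontier K, ∃ y ∈ frontier K,
      p ∈ openSegment ℝ x q ∧ q ∈ openSegment ℝ p y ∧
      H p q = (1 / 2) * Real.log ((‖p - y‖ * ‖q - x‖) / (‖q - y‖ * ‖p - x‖)))

set_option maxHeartbeats 1000000 in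
/-- Characterization of Hilbert bisector points in the plane: with `x, z, p, y` and
`x', z, p', y'` the chords through `z` and the two sites, `z` is on the `(p,p')`-bisector
iff the lines `xx'`, `pp'`, and `yy'` are concurrent. -/
theorem hilbert_bisector_concurrency {K : Set (EuclideanSpace ℝ (Fin 2))}
    (hKcomp : IsCompact K) (hKconv : Convex ℝ K) (hKint : (interior K).Nonempty)
    (H : EuclideanSpace ℝ (Fin 2) → EuclideanSpace ℝ (Fin 2) → ℝ)
    (hH : IsHilbertDist K H)
    (p p' z : EuclideanSpace ℝ (Fin 2))
    (hp : p ∈ interior K) (hp' : p' ∈ interior K) (hz : z ∈ interior K)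
    (hne : p ≠ p')
    (hzline : z ∉ affineSpan ℝ ({p, p'} : Set (EuclideanSpace ℝ (Fin 2))))
    (x y x' y' : EuclideanSpace ℝ (Fin 2))
    (hx : x ∈ frontier K) (hy : y ∈ frontier K)
    (hx' : x' ∈ frontier K) (hy' : y' ∈ frontier K)
    (hord1 : z ∈ openSegment ℝ x p) (hord2 : p ∈ openSegment ℝ z y)
    (hord1' : z ∈ openSegment ℝ x' p') (hord2' : p' ∈ openSegment ℝ z y')
    (hnpar_x : ¬ AffineSubspace.Parallel
        (affineSpan ℝ ({x, x'} : Set (EuclideanSpace ℝ (Fin 2))))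
        (affineSpan ℝ ({p, p'} : Set (EuclideanSpace ℝ (Fin 2)))))
    (hnpar_y : ¬ AffineSubspace.Parallel
        (affineSpan ℝ ({y, y'} : Set (EuclideanSpace ℝ (Fin 2))))
        (affineSpan ℝ ({p, p'} : Set (EuclideanSpace ℝ (Fin 2))))) :
    H z p = H z p' ↔
      ∃ w : EuclideanSpace ℝ (Fin 2),
        w ∈ affineSpan ℝ ({x, x'} : Set (EuclideanSpace ℝ (Fin 2))) ∧
        w ∈ affineSpan ℝ ({p, p'} : Set (EuclideanSpace ℝ (Fin 2))) ∧
        w ∈ affineSpan ℝ ({y, y'} : Set (EuclideanSpace ℝ (Fin 2))) := by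
  obtain ⟨hH0, hHf⟩ := hH
  have hzp : z ≠ p := fun h => hzline (h ▸ left_mem_affineSpan_pair ℝ p p')
  have hzp' : z ≠ p' := fun h => hzline (h ▸ right_mem_affineSpan_pair ℝ p p')
  set u := p - z with hu_def
  set u' := p' - z with hu'_def
  have hp_eq : p = z + u := by rw [hu_def]; abel
  have hp'_eq : p' = z + u' := by rw [hu'_def]; abel
  have hu0 : u ≠ 0 := sub_ne_zero.2 hzp.symm
  have hu'0 : u' ≠ 0 := sub_ne_zero.2 hzp'.symm
  -- coordinates with respect to u, u'
  have hcoord : ∀ c₁ c₂ : ℝ, c₁ • u + c₂ • u' = 0 → c₁ = 0 ∧ c₂ = 0 := by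
    intro c₁ c₂ hc
    by_cases h2 : c₂ = 0
    · subst h2
      rw [zero_smul, add_zero, smul_eq_zero] at hc
      exact ⟨hc.resolve_right hu0, rfl⟩
    · exfalso
      obtain ⟨c, hc'⟩ : ∃ c : ℝ, u' = c • u := by
        refine ⟨-c₁ / c₂, ?_⟩
        apply smul_right_injective (EuclideanSpace ℝ (Fin 2)) h2
        show c₂ • u' = c₂ • ((-c₁ / c₂) • u)
        rw [smul_smul, mul_div_cancel₀ _ h2]
        linear_combination (norm := module) hc
      have hc1 : c ≠ 1 := by
        intro h1
        apply hne
        rw [hp_eq, hp'_eq, hc', h1, one_smul]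
      have hc1' : (1 : ℝ) - c ≠ 0 := sub_ne_zero.2 (Ne.symm hc1)
      apply hzline
      have hzeq : z = AffineMap.lineMap p p' (1 / (1 - c)) := by
        rw [AffineMap.lineMap_apply]
        simp only [vsub_eq_sub, vadd_eq_add]
        rw [hp_eq, hp'_eq, hc']
        match_scalars <;> rw [eq_comm, ← sub_eq_zero] <;> field_simp <;> try ring
      rw [hzeq]
      exact AffineMap.lineMap_mem_affineSpan_pair _ _ _
  have hcoord2 : ∀ c₁ c₂ d₁ d₂ : ℝ, c₁ • u + c₂ • u' = d₁ • u + d₂ • u' → c₁ = d₁ ∧ c₂ = d₂ := by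
    intro c₁ c₂ d₁ d₂ h
    have h0 := hcoord (c₁ - d₁) (c₂ - d₂) (by linear_combination (norm := module) h)
    exact ⟨by linarith [h0.1], by linarith [h0.2]⟩
  -- chord parameters
  obtain ⟨a, ha, hxe⟩ := seg_param hord1
  obtain ⟨b, hb, hye⟩ := seg_param2 hord2
  obtain ⟨a', ha', hxe'⟩ := seg_param hord1'
  obtain ⟨b', hb', hye'⟩ := seg_param2 hord2'
  rw [← hu_def] at hxe hye
  rw [← hu'_def] at hxe' hye'
  -- Hilbert distance H z p
  obtain ⟨x₀, hx₀, y₀, hy₀, hos1, hos2, hHv⟩ := hHf z hz p hp hzp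
  obtain ⟨a₀, ha₀, hx₀e⟩ := seg_param hos1
  obtain ⟨b₀, hb₀, hy₀e⟩ := seg_param2 hos2
  rw [← hu_def] at hx₀e hy₀e
  have haa₀ : a = a₀ := by
    refine frontier_param_unique (v := -u) hKconv hz ha ha₀ ?_ ?_
    · rw [show z + a • (-u) = z - a • u by module, ← hxe]; exact hx
    · rw [show z + a₀ • (-u) = z - a₀ • u by module, ← hx₀e]; exact hx₀
  have hbb₀ : b = b₀ := by
    refine frontier_param_unique (v := u) hKconv hz (by linarith) (by linarith) ?_ ?_
    · rw [← hye]; exact hy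
    · rw [← hy₀e]; exact hy₀
  rw [← haa₀] at hx₀e
  rw [← hbb₀] at hy₀e
  have hnu : ‖u‖ ≠ 0 := norm_ne_zero_iff.2 hu0
  have hnupos : 0 < ‖u‖ := norm_pos_iff.2 hu0
  have hval : H z p = 1 / 2 * Real.log ((b * (1 + a)) / ((b - 1) * a)) := by
    rw [hHv, hy₀e, hx₀e, hp_eq]
    rw [show z - (z + b • u) = -(b • u) by abel]
    rw [show z + u - (z - a • u) = (1 + a) • u by module]
    rw [show z + u - (z + b • u) = -((b - 1) • u) by module]
    rw [show z - (z - a • u) = a • u by module]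
    simp only [norm_neg, norm_smul, Real.norm_eq_abs]
    rw [abs_of_pos (show (0:ℝ) < b by linarith), abs_of_pos (show (0:ℝ) < 1 + a by linarith),
      abs_of_pos (show (0:ℝ) < b - 1 by linarith), abs_of_pos ha]
    have harg : b * ‖u‖ * ((1 + a) * ‖u‖) / ((b - 1) * ‖u‖ * (a * ‖u‖))
        = b * (1 + a) / ((b - 1) * a) := by
      rw [div_eq_div_iff
        (mul_pos (mul_pos (show (0:ℝ) < b - 1 by linarith) hnupos) (mul_pos ha hnupos)).ne'
        (mul_pos (show (0:ℝ) < b - 1 by linarith) ha).ne']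
      ring
    rw [harg]
  -- Hilbert distance H z p'
  obtain ⟨x₀', hx₀', y₀', hy₀', hos1', hos2', hHv'⟩ := hHf z hz p' hp' hzp'
  obtain ⟨a₀', ha₀', hx₀e'⟩ := seg_param hos1'
  obtain ⟨b₀', hb₀', hy₀e'⟩ := seg_param2 hos2'
  rw [← hu'_def] at hx₀e' hy₀e'
  have haa₀' : a' = a₀' := by
    refine frontier_param_unique (v := -u') hKconv hz ha' ha₀' ?_ ?_
    · rw [show z + a' • (-u') = z - a' • u' by module, ← hxe']; exact hx'
    · rw [show z + a₀' • (-u') = z - a₀' • u' by module, ← hx₀e']; exact hx₀'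
  have hbb₀' : b' = b₀' := by
    refine frontier_param_unique (v := u') hKconv hz (by linarith) (by linarith) ?_ ?_
    · rw [← hye']; exact hy'
    · rw [← hy₀e']; exact hy₀'
  rw [← haa₀'] at hx₀e'
  rw [← hbb₀'] at hy₀e'
  have hnu' : ‖u'‖ ≠ 0 := norm_ne_zero_iff.2 hu'0
  have hval' : H z p' = 1 / 2 * Real.log ((b' * (1 + a')) / ((b' - 1) * a')) := by
    rw [hHv', hy₀e', hx₀e', hp'_eq]
    rw [show z - (z + b' • u') = -(b' • u') by abel]
    rw [show z + u' - (z - a' • u') = (1 + a') • u' by module]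
    rw [show z + u' - (z + b' • u') = -((b' - 1) • u') by module]
    rw [show z - (z - a' • u') = a' • u' by module]
    simp only [norm_neg, norm_smul, Real.norm_eq_abs]
    rw [abs_of_pos (show (0:ℝ) < b' by linarith), abs_of_pos (show (0:ℝ) < 1 + a' by linarith),
      abs_of_pos (show (0:ℝ) < b' - 1 by linarith), abs_of_pos ha']
    have hnupos' : 0 < ‖u'‖ := norm_pos_iff.2 hu'0
    have harg : b' * ‖u'‖ * ((1 + a') * ‖u'‖) / ((b' - 1) * ‖u'‖ * (a' * ‖u'‖))
        = b' * (1 + a') / ((b' - 1) * a') := by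
      rw [div_eq_div_iff
        (mul_pos (mul_pos (show (0:ℝ) < b' - 1 by linarith) hnupos') (mul_pos ha' hnupos')).ne'
        (mul_pos (show (0:ℝ) < b' - 1 by linarith) ha').ne']
      ring
    rw [harg]
  -- nondegeneracy from the non-parallel hypotheses
  have haa' : a ≠ a' := by
    intro h
    apply hnpar_x
    rw [AffineSubspace.affineSpan_pair_parallel_iff_vectorSpan_eq, vectorSpan_pair,
      vectorSpan_pair]
    have hxx : x -ᵥ x' = (-a) • (p -ᵥ p') := by
      simp only [vsub_eq_sub]
      rw [hxe, hxe', hp_eq, hp'_eq, h]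
      module
    rw [hxx]
    exact Submodule.span_singleton_smul_eq (isUnit_iff_ne_zero.2 (by linarith)) _
  have hbb' : b ≠ b' := by
    intro h
    apply hnpar_y
    rw [AffineSubspace.affineSpan_pair_parallel_iff_vectorSpan_eq, vectorSpan_pair,
      vectorSpan_pair]
    have hyy : y -ᵥ y' = b • (p -ᵥ p') := by
      simp only [vsub_eq_sub]
      rw [hye, hye', hp_eq, hp'_eq, h]
      module
    rw [hyy]
    exact Submodule.span_singleton_smul_eq (isUnit_iff_ne_zero.2 (by linarith)) _
  have hsa : a - a' ≠ 0 := sub_ne_zero.2 haa'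
  have hsb : b' - b ≠ 0 := sub_ne_zero.2 (Ne.symm hbb')
  have hd1 : (0:ℝ) < (b - 1) * a := mul_pos (by linarith) ha
  have hd2 : (0:ℝ) < (b' - 1) * a' := mul_pos (by linarith) ha'
  have hn1 : (0:ℝ) < b * (1 + a) := mul_pos (by linarith) (by linarith)
  have hn2 : (0:ℝ) < b' * (1 + a') := mul_pos (by linarith) (by linarith)
  rw [hval, hval']
  constructor
  · intro h
    have hlog : Real.log ((b * (1 + a)) / ((b - 1) * a)) =
        Real.log ((b' * (1 + a')) / ((b' - 1) * a')) := by linarith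
    have hR : (b * (1 + a)) / ((b - 1) * a) = (b' * (1 + a')) / ((b' - 1) * a') :=
      Real.log_injOn_pos (Set.mem_Ioi.2 (div_pos hn1 hd1)) (Set.mem_Ioi.2 (div_pos hn2 hd2)) hlog
    rw [div_eq_div_iff hd1.ne' hd2.ne'] at hR
    -- hR : b * (1 + a) * ((b' - 1) * a') = b' * (1 + a') * ((b - 1) * a)
    obtain ⟨S, hS1, hS2⟩ : ∃ S : ℝ, S * (a - a') = -a' * (1 + a) ∧
        S * (b' - b) = b' * (1 - b) := by
      refine ⟨-a' * (1 + a) / (a - a'), by field_simp, ?_⟩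
      rw [div_mul_eq_mul_div, div_eq_iff hsa]
      linear_combination -hR
    refine ⟨z + (1 - S) • u + S • u', ?_, ?_, ?_⟩
    · have hmem := (vadd_left_mem_affineSpan_pair (k := ℝ) (p₁ := x) (p₂ := x')
        (v := (z + (1 - S) • u + S • u') - x)).2 ⟨-S / a', ?_⟩
      · rwa [vadd_eq_add, sub_add_cancel] at hmem
      · simp only [vsub_eq_sub]
        rw [hxe, hxe']
        match_scalars <;> field_simp [ha'.ne']
        · linear_combination hS1
        · linear_combination -hS1
    · have hmem := (vadd_left_mem_affineSpan_pair (k := ℝ) (p₁ := p) (p₂ := p')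
        (v := (z + (1 - S) • u + S • u') - p)).2 ⟨S, ?_⟩
      · rwa [vadd_eq_add, sub_add_cancel] at hmem
      · simp only [vsub_eq_sub]
        rw [hp_eq, hp'_eq]
        match_scalars <;> ring
    · have hmem := (vadd_left_mem_affineSpan_pair (k := ℝ) (p₁ := y) (p₂ := y')
        (v := (z + (1 - S) • u + S • u') - y)).2 ⟨S / b', ?_⟩
      · rwa [vadd_eq_add, sub_add_cancel] at hmem
      · simp only [vsub_eq_sub]
        rw [hye, hye']
        match_scalars <;> field_simp [(show (0:ℝ) < b' by linarith).ne']
        · linear_combination -hS2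
        · linear_combination hS2
  · rintro ⟨w, hw1, hw2, hw3⟩
    obtain ⟨r, hr⟩ : ∃ r : ℝ, r • (x' - x) = w - x := by
      have h1 : (w - x) +ᵥ x ∈ affineSpan ℝ ({x, x'} : Set (EuclideanSpace ℝ (Fin 2))) := by
        rwa [vadd_eq_add, sub_add_cancel]
      have h2 := (vadd_left_mem_affineSpan_pair (k := ℝ)).1 h1
      simpa [vsub_eq_sub] using h2
    obtain ⟨s, hs⟩ : ∃ s : ℝ, s • (p' - p) = w - p := by
      have h1 : (w - p) +ᵥ p ∈ affineSpan ℝ ({p, p'} : Set (EuclideanSpace ℝ (Fin 2))) := by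
        rwa [vadd_eq_add, sub_add_cancel]
      have h2 := (vadd_left_mem_affineSpan_pair (k := ℝ)).1 h1
      simpa [vsub_eq_sub] using h2
    obtain ⟨t, ht⟩ : ∃ t : ℝ, t • (y' - y) = w - y := by
      have h1 : (w - y) +ᵥ y ∈ affineSpan ℝ ({y, y'} : Set (EuclideanSpace ℝ (Fin 2))) := by
        rwa [vadd_eq_add, sub_add_cancel]
      have h2 := (vadd_left_mem_affineSpan_pair (k := ℝ)).1 h1
      simpa [vsub_eq_sub] using h2
    rw [hxe, hxe'] at hr
    rw [hp_eq, hp'_eq] at hs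
    rw [hye, hye'] at ht
    obtain ⟨e1, e2⟩ := hcoord ((1 - s) - (r * a - a)) (s + r * a')
      (by linear_combination (norm := module) hs - hr)
    obtain ⟨e3, e4⟩ := hcoord ((1 - s) - (b - t * b)) (s - t * b')
      (by linear_combination (norm := module) hs - ht)
    have hr2 : r * (a - a') = 1 + a := by linear_combination -e1 - e2
    have ht2 : t * (b' - b) = 1 - b := by linear_combination -e3 - e4
    have hs3 : -(r * a') = t * b' := by linear_combination e4 - e2
    have hD : -((1 + a) * a') * (b' - b) = (1 - b) * b' * (a - a') := by
      linear_combination (a' * (b' - b)) * hr2 + (b' * (a - a')) * ht2 +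
        ((a - a') * (b' - b)) * hs3
    have hratio : b * (1 + a) / ((b - 1) * a) = b' * (1 + a') / ((b' - 1) * a') := by
      rw [div_eq_div_iff hd1.ne' hd2.ne']
      linear_combination -hD
    rw [hratio]
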